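/- The system EN^Δ is strongly complete with respect to the class of all (n)-frames and also with respect to the class of all (nz)-frames: every EN^Δ-consistent set of formulas is satisfiable at some state of some neighborhood model whose neighborhood function at every state contains the unit S and is closed under complements (hence in particular contains the unit). -/

import Mathlib

/-- The language L(Δ) of contingency logic: φ ::= p | ¬φ | (φ ∧ φ) | Δφ. -/
inductive Formula (P : Type) : Type
  | atom : P → Formula P
  | neg : Formula P → Formula P
  | and : Formula P → Formula P → Formula P
  | delta : Formula P → Formula P

namespace Formula

variable {P : Type}

/-- φ ∨ ψ abbreviates ¬(¬φ ∧ ¬ψ). -/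
def or (φ ψ : Formula P) : Formula P := neg (and (neg φ) (neg ψ))

/-- φ → ψ abbreviates ¬(φ ∧ ¬ψ). -/
def imp (φ ψ : Formula P) : Formula P := neg (and φ (neg ψ))

/-- φ ↔ ψ abbreviates (φ → ψ) ∧ (ψ → φ). -/
def iffF (φ ψ : Formula P) : Formula P := and (imp φ ψ) (imp ψ φ)

end Formula

/-- ⊤ : a fixed tautology (p ∨ ¬p for a fixed propositional variable p). -/
noncomputable def Formula.top (P : Type) [Nonempty P] : Formula P :=
  Formula.or (Formula.atom (Classical.arbitrary P))
    (Formula.neg (Formula.atom (Classical.arbitrary P)))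

/-- A neighborhood model ⟨S, N, V⟩: a nonempty set of states `S`, a neighborhood
function `N : S → P(P(S))` and a valuation `V`. -/
structure NbhdModel (P : Type) where
  S : Type
  nonempty : Nonempty S
  N : S → Set (Set S)
  V : P → Set S

/-- The truth set ⟦φ⟧ of a formula in a neighborhood model; the clause for `Δφ` says
that a state `s` satisfies `Δφ` iff ⟦φ⟧ ∈ N(s) or S ∖ ⟦φ⟧ ∈ N(s). -/
def NbhdModel.truthSet {P : Type} (M : NbhdModel P) : Formula P → Set M.S
  | .atom p => M.V p
  | .neg φ => (M.truthSet φ)ᶜ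
  | .and φ ψ => M.truthSet φ ∩ M.truthSet ψ
  | .delta φ => {s | M.truthSet φ ∈ M.N s ∨ (M.truthSet φ)ᶜ ∈ M.N s}

/-- Satisfaction: M,s ⊨ φ. -/
def NbhdModel.sat {P : Type} (M : NbhdModel P) (s : M.S) (φ : Formula P) : Prop :=
  s ∈ M.truthSet φ

/-- Frame property (m): closure under supersets. -/
def SupersetClosed {S : Type} (N : S → Set (Set S)) : Prop :=
  ∀ s : S, ∀ X Y : Set S, X ∈ N s → X ⊆ Y → Y ∈ N s

/-- Frame property (c): closure under binary intersections. -/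
def InterClosed {S : Type} (N : S → Set (Set S)) : Prop :=
  ∀ s : S, ∀ X Y : Set S, X ∈ N s → Y ∈ N s → X ∩ Y ∈ N s

/-- Frame property (n): contains the unit. -/
def ContainsUnit {S : Type} (N : S → Set (Set S)) : Prop :=
  ∀ s : S, (Set.univ : Set S) ∈ N s

/-- Frame property (z): closure under complements. -/
def ComplClosed {S : Type} (N : S → Set (Set S)) : Prop :=
  ∀ s : S, ∀ X : Set S, X ∈ N s → Xᶜ ∈ N s

/-- The supplementation of a neighborhood function:
`N⁺(s) = {X ⊆ S : Y ⊆ X for some Y ∈ N(s)}`. -/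
def suppN {S : Type} (N : S → Set (Set S)) (s : S) : Set (Set S) :=
  {X | ∃ Y ∈ N s, Y ⊆ X}

/-- `φ` is a substitution instance of a propositional tautology: every Boolean valuation
of formulas that respects `¬` and `∧` (treating atoms and Δ-formulas as atomic) makes
`φ` true. -/
def Tautology {P : Type} (φ : Formula P) : Prop :=
  ∀ v : Formula P → Bool,
    (∀ ψ, v (Formula.neg ψ) = !(v ψ)) →
    (∀ ψ χ, v (Formula.and ψ χ) = (v ψ && v χ)) →
    v φ = true

/-- Derivability in the system E^Δ (TAUT + ΔEqu + MP + REΔ) extended with the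
additional axioms in `Ax`. -/
inductive Deriv {P : Type} (Ax : Set (Formula P)) : Formula P → Prop
  | ax {φ} (h : φ ∈ Ax) : Deriv Ax φ
  | taut {φ} (h : Tautology φ) : Deriv Ax φ
  | equ (φ) : Deriv Ax (Formula.iffF (Formula.delta φ) (Formula.delta (Formula.neg φ)))
  | mp {φ ψ} (h1 : Deriv Ax (Formula.imp φ ψ)) (h2 : Deriv Ax φ) : Deriv Ax ψ
  | re {φ ψ} (h : Deriv Ax (Formula.iffF φ ψ)) :
      Deriv Ax (Formula.iffF (Formula.delta φ) (Formula.delta ψ))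

/-- Derivability of `φ` from the set of premises `Γ` in the system E^Δ + `Ax`. -/
inductive DerivFrom {P : Type} (Ax Γ : Set (Formula P)) : Formula P → Prop
  | mem {φ} (h : φ ∈ Γ) : DerivFrom Ax Γ φ
  | thm {φ} (h : Deriv Ax φ) : DerivFrom Ax Γ φ
  | mp {φ ψ} (h1 : DerivFrom Ax Γ (Formula.imp φ ψ)) (h2 : DerivFrom Ax Γ φ) :
      DerivFrom Ax Γ ψ

/-- `Γ` is consistent in the system E^Δ + `Ax`: no contradiction is derivable from `Γ`. -/
def Consistent {P : Type} (Ax Γ : Set (Formula P)) : Prop :=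
  ¬ ∃ φ : Formula P, DerivFrom Ax Γ φ ∧ DerivFrom Ax Γ (Formula.neg φ)

/-- The axiom ΔM: all instances of Δφ → Δ(φ ∨ ψ) ∨ Δ(¬φ ∨ χ). -/
def AxDeltaM {P : Type} : Set (Formula P) :=
  {f | ∃ φ ψ χ : Formula P,
     f = Formula.imp (Formula.delta φ)
           (Formula.or (Formula.delta (Formula.or φ ψ))
                       (Formula.delta (Formula.or (Formula.neg φ) χ)))}

/-- The axiom ΔC: all instances of (Δφ ∧ Δψ) → Δ(φ ∧ ψ). -/
def AxDeltaC {P : Type} : Set (Formula P) :=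
  {f | ∃ φ ψ : Formula P,
     f = Formula.imp (Formula.and (Formula.delta φ) (Formula.delta ψ))
           (Formula.delta (Formula.and φ ψ))}

/-- The axiom ΔN: Δ⊤. -/
noncomputable def AxDeltaN (P : Type) [Nonempty P] : Set (Formula P) :=
  {Formula.delta (Formula.top P)}


namespace CLAux
open Formula
variable {P : Type}

theorem tautI (φ : Formula P) : Tautology (imp φ φ) := by
  intro v hn ha; simp only [Formula.imp, hn, ha]; cases v φ <;> rfl

theorem tautK (φ ψ : Formula P) : Tautology (imp ψ (imp φ ψ)) := by
  intro v hn ha; simp only [Formula.imp, hn, ha]; cases v φ <;> cases v ψ <;> rfl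

theorem tautS (φ χ ψ : Formula P) :
    Tautology (imp (imp φ (imp χ ψ)) (imp (imp φ χ) (imp φ ψ))) := by
  intro v hn ha; simp only [Formula.imp, hn, ha]
  cases v φ <;> cases v χ <;> cases v ψ <;> rfl

theorem tautT1 (φ ψ : Formula P) :
    Tautology (imp (imp φ ψ) (imp (imp φ (neg ψ)) (neg φ))) := by
  intro v hn ha; simp only [Formula.imp, hn, ha]; cases v φ <;> cases v ψ <;> rfl

theorem tautDN (φ : Formula P) : Tautology (imp (neg (neg φ)) φ) := by
  intro v hn ha; simp only [Formula.imp, hn, ha]; cases v φ <;> rfl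

theorem tautAndE1 (φ ψ : Formula P) : Tautology (imp (Formula.and φ ψ) φ) := by
  intro v hn ha; simp only [Formula.imp, hn, ha]; cases v φ <;> cases v ψ <;> rfl

theorem tautAndE2 (φ ψ : Formula P) : Tautology (imp (Formula.and φ ψ) ψ) := by
  intro v hn ha; simp only [Formula.imp, hn, ha]; cases v φ <;> cases v ψ <;> rfl

theorem tautAndI (φ ψ : Formula P) : Tautology (imp φ (imp ψ (Formula.and φ ψ))) := by
  intro v hn ha; simp only [Formula.imp, hn, ha]; cases v φ <;> cases v ψ <;> rfl

theorem tautTop (P : Type) [Nonempty P] : Tautology (Formula.top P) := by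
  intro v hn ha
  simp only [Formula.top, Formula.or, hn, ha]
  cases v (Formula.atom (Classical.arbitrary P)) <;> rfl

theorem _root_.DerivFrom.mono {Ax Γ Γ' : Set (Formula P)} (h : Γ ⊆ Γ') {φ}
    (hd : DerivFrom Ax Γ φ) : DerivFrom Ax Γ' φ := by
  induction hd with
  | mem h' => exact .mem (h h')
  | thm h' => exact .thm h'
  | mp _ _ ih1 ih2 => exact .mp ih1 ih2

theorem deduction {Ax Γ : Set (Formula P)} {φ ψ}
    (h : DerivFrom Ax (insert φ Γ) ψ) : DerivFrom Ax Γ (imp φ ψ) := by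
  induction h with
  | @mem χ h' =>
    rcases h' with rfl | h'
    · exact .thm (.taut (tautI _))
    · exact .mp (.thm (.taut (tautK φ χ))) (.mem h')
  | @thm χ h' => exact .mp (.thm (.taut (tautK φ χ))) (.thm h')
  | @mp χ θ _ _ ih1 ih2 =>
    exact .mp (.mp (.thm (.taut (tautS φ χ θ))) ih1) ih2

/-- From an inconsistent extension by φ, derive ¬φ. -/
theorem neg_of_inconsistent_insert {Ax Γ : Set (Formula P)} {φ}
    (h : ¬ Consistent Ax (insert φ Γ)) : DerivFrom Ax Γ (Formula.neg φ) := by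
  rw [Consistent, not_not] at h
  obtain ⟨ψ, h1, h2⟩ := h
  exact .mp (.mp (.thm (.taut (tautT1 φ ψ))) (deduction h1)) (deduction h2)

theorem consistent_insert_or {Ax Γ : Set (Formula P)} (h : Consistent Ax Γ) (φ : Formula P) :
    Consistent Ax (insert φ Γ) ∨ Consistent Ax (insert (Formula.neg φ) Γ) := by
  by_contra hc
  push_neg at hc
  exact h ⟨Formula.neg φ, neg_of_inconsistent_insert hc.1,
    neg_of_inconsistent_insert hc.2⟩

theorem derivFrom_sUnion {Ax : Set (Formula P)} {c : Set (Set (Formula P))}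
    (hc : IsChain (· ⊆ ·) c) (hne : c.Nonempty) {φ}
    (h : DerivFrom Ax (⋃₀ c) φ) : ∃ t ∈ c, DerivFrom Ax t φ := by
  induction h with
  | mem h' => obtain ⟨t, ht, hφ⟩ := h'; exact ⟨t, ht, .mem hφ⟩
  | thm h' => obtain ⟨t, ht⟩ := hne; exact ⟨t, ht, .thm h'⟩
  | mp _ _ ih1 ih2 =>
    obtain ⟨t1, ht1, hd1⟩ := ih1
    obtain ⟨t2, ht2, hd2⟩ := ih2
    rcases eq_or_ne t1 t2 with rfl | hne'
    · exact ⟨t1, ht1, .mp hd1 hd2⟩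
    · rcases hc ht1 ht2 hne' with hsub | hsub
      · exact ⟨t2, ht2, .mp (hd1.mono hsub) hd2⟩
      · exact ⟨t1, ht1, .mp hd1 (hd2.mono hsub)⟩

/-- A maximal consistent set. -/
def MCS (Ax Γ : Set (Formula P)) : Prop :=
  Consistent Ax Γ ∧ ∀ φ : Formula P, φ ∈ Γ ∨ Formula.neg φ ∈ Γ

theorem lindenbaum {Ax Γ : Set (Formula P)} (h : Consistent Ax Γ) :
    ∃ Δ, Γ ⊆ Δ ∧ MCS Ax Δ := by
  have hub : ∀ c ⊆ {Δ : Set (Formula P) | Consistent Ax Δ}, IsChain (· ⊆ ·) c →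
      c.Nonempty → ∃ ub ∈ {Δ : Set (Formula P) | Consistent Ax Δ}, ∀ s ∈ c, s ⊆ ub := by
    intro c hcsub hchain hcne
    refine ⟨⋃₀ c, ?_, fun s hs => Set.subset_sUnion_of_mem hs⟩
    intro ⟨φ, h1, h2⟩
    obtain ⟨t1, ht1, hd1⟩ := derivFrom_sUnion hchain hcne h1
    obtain ⟨t2, ht2, hd2⟩ := derivFrom_sUnion hchain hcne h2
    rcases eq_or_ne t1 t2 with rfl | hne'
    · exact hcsub ht1 ⟨φ, hd1, hd2⟩
    · rcases hchain ht1 ht2 hne' with hsub | hsub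
      · exact hcsub ht2 ⟨φ, hd1.mono hsub, hd2⟩
      · exact hcsub ht1 ⟨φ, hd1, hd2.mono hsub⟩
  obtain ⟨Δ, hsub, hΔmem, hΔmax⟩ :=
    zorn_subset_nonempty {Δ : Set (Formula P) | Consistent Ax Δ} hub Γ h
  refine ⟨Δ, hsub, hΔmem, fun φ => ?_⟩
  rcases consistent_insert_or hΔmem φ with hc | hc
  · exact Or.inl (hΔmax hc (Set.subset_insert _ _) (Set.mem_insert _ _))
  · exact Or.inr (hΔmax hc (Set.subset_insert _ _) (Set.mem_insert _ _))

namespace MCS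
variable {Ax Γ : Set (Formula P)}

theorem closed (hΓ : MCS Ax Γ) {φ} (h : DerivFrom Ax Γ φ) : φ ∈ Γ := by
  rcases hΓ.2 φ with h' | h'
  · exact h'
  · exact absurd ⟨φ, h, .mem h'⟩ hΓ.1

theorem thm_mem (hΓ : MCS Ax Γ) {φ} (h : Deriv Ax φ) : φ ∈ Γ := hΓ.closed (.thm h)

theorem mem_neg (hΓ : MCS Ax Γ) {φ} : Formula.neg φ ∈ Γ ↔ φ ∉ Γ := by
  constructor
  · intro h h'
    exact hΓ.1 ⟨φ, .mem h', .mem h⟩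
  · intro h
    rcases hΓ.2 φ with h' | h'
    · exact absurd h' h
    · exact h'

theorem mem_and (hΓ : MCS Ax Γ) {φ ψ} : Formula.and φ ψ ∈ Γ ↔ φ ∈ Γ ∧ ψ ∈ Γ := by
  constructor
  · intro h
    exact ⟨hΓ.closed (.mp (.thm (.taut (tautAndE1 φ ψ))) (.mem h)),
           hΓ.closed (.mp (.thm (.taut (tautAndE2 φ ψ))) (.mem h))⟩
  · intro ⟨h1, h2⟩
    exact hΓ.closed (.mp (.mp (.thm (.taut (tautAndI φ ψ))) (.mem h1)) (.mem h2))

theorem mem_imp (hΓ : MCS Ax Γ) {φ ψ} : Formula.imp φ ψ ∈ Γ ↔ (φ ∈ Γ → ψ ∈ Γ) := by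
  rw [Formula.imp, hΓ.mem_neg, hΓ.mem_and, hΓ.mem_neg]
  tauto

theorem mem_iffF (hΓ : MCS Ax Γ) {φ ψ} : Formula.iffF φ ψ ∈ Γ ↔ (φ ∈ Γ ↔ ψ ∈ Γ) := by
  rw [Formula.iffF, hΓ.mem_and, hΓ.mem_imp, hΓ.mem_imp]
  tauto

end MCS

theorem deriv_of_derivFrom_empty {Ax : Set (Formula P)} {φ}
    (h : DerivFrom Ax ∅ φ) : Deriv Ax φ := by
  induction h with
  | mem h' => exact absurd h' (Set.notMem_empty _)
  | thm h' => exact h'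
  | mp _ _ ih1 ih2 => exact .mp ih1 ih2

/-- If φ holds in every MCS, then φ is derivable. -/
theorem deriv_of_all_mcs {Ax : Set (Formula P)} {φ : Formula P}
    (h : ∀ Δ, MCS Ax Δ → φ ∈ Δ) : Deriv Ax φ := by
  by_cases hc : Consistent Ax ({Formula.neg φ} : Set (Formula P))
  · obtain ⟨Δ, hsub, hΔ⟩ := lindenbaum hc
    have h1 : Formula.neg φ ∈ Δ := hsub rfl
    have h2 : φ ∈ Δ := h Δ hΔ
    exact absurd ⟨φ, .mem h2, .mem h1⟩ hΔ.1
  · have : ({Formula.neg φ} : Set (Formula P)) = insert (Formula.neg φ) ∅ := by simp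
    rw [this] at hc
    have hd := neg_of_inconsistent_insert hc
    exact .mp (.taut (tautDN φ)) (deriv_of_derivFrom_empty hd)

/- ### The canonical model -/

/-- States of the canonical model: maximal consistent sets. -/
def CanS (Ax : Set (Formula P)) : Type := {Δ : Set (Formula P) // MCS Ax Δ}

def proofSet (Ax : Set (Formula P)) (φ : Formula P) : Set (CanS Ax) := {s | φ ∈ s.1}

theorem proofSet_neg (Ax : Set (Formula P)) (φ : Formula P) :
    proofSet Ax (Formula.neg φ) = (proofSet Ax φ)ᶜ := by
  ext s; exact s.2.mem_neg

theorem deriv_iffF_of_proofSet_eq {Ax : Set (Formula P)} {φ ψ : Formula P}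
    (h : proofSet Ax φ = proofSet Ax ψ) : Deriv Ax (Formula.iffF φ ψ) := by
  apply deriv_of_all_mcs
  intro Δ hΔ
  rw [hΔ.mem_iffF]
  exact Set.ext_iff.mp h ⟨Δ, hΔ⟩

/-- The canonical model. -/
def canM (Ax : Set (Formula P)) (hne : Nonempty (CanS Ax)) : NbhdModel P where
  S := CanS Ax
  nonempty := hne
  N s := {X | ∃ ψ, Formula.delta ψ ∈ s.1 ∧ (X = proofSet Ax ψ ∨ X = (proofSet Ax ψ)ᶜ)}
  V p := proofSet Ax (Formula.atom p)

theorem delta_mem_of_proofSet_mem {Ax : Set (Formula P)} {hne : Nonempty (CanS Ax)}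
    {s : (canM Ax hne).S} {χ : Formula P}
    (h : proofSet Ax χ ∈ (canM Ax hne).N s) : Formula.delta χ ∈ s.1 := by
  obtain ⟨ψ, hψ, heq | heq⟩ := h
  · have hiff := Deriv.re (deriv_iffF_of_proofSet_eq heq)
    exact (s.2.mem_iffF.mp (s.2.thm_mem hiff)).mpr hψ
  · rw [← proofSet_neg] at heq
    have hiff := Deriv.re (deriv_iffF_of_proofSet_eq heq)
    have hψn : Formula.delta (Formula.neg ψ) ∈ s.1 :=
      (s.2.mem_iffF.mp (s.2.thm_mem (Deriv.equ ψ))).mp hψ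
    exact (s.2.mem_iffF.mp (s.2.thm_mem hiff)).mpr hψn

theorem truth_lemma (Ax : Set (Formula P)) (hne : Nonempty (CanS Ax)) (φ : Formula P) :
    (canM Ax hne).truthSet φ = proofSet Ax φ := by
  induction φ with
  | atom p => rfl
  | neg φ ih =>
    show ((canM Ax hne).truthSet φ)ᶜ = _
    rw [ih, proofSet_neg]
    rfl
  | and φ ψ ih1 ih2 =>
    show (canM Ax hne).truthSet φ ∩ (canM Ax hne).truthSet ψ = _
    rw [ih1, ih2]
    ext s
    exact (s.2.mem_and).symm
  | delta φ ih =>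
    ext s
    show ((canM Ax hne).truthSet φ ∈ (canM Ax hne).N s ∨
          ((canM Ax hne).truthSet φ)ᶜ ∈ (canM Ax hne).N s) ↔ Formula.delta φ ∈ s.1
    rw [ih]
    constructor
    · rintro (h | h)
      · exact delta_mem_of_proofSet_mem h
      · replace h : proofSet Ax (Formula.neg φ) ∈ (canM Ax hne).N s := by
          rw [proofSet_neg]; exact h
        have := delta_mem_of_proofSet_mem h
        exact (s.2.mem_iffF.mp (s.2.thm_mem (Deriv.equ φ))).mpr this
    · intro h
      exact Or.inl ⟨φ, h, Or.inl rfl⟩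

end CLAux

/-- the system EN^Δ = E^Δ + ΔN is strongly complete with respect to the
class of all (n)-frames and also with respect to the class of all (nz)-frames: every
EN^Δ-consistent set of formulas is satisfiable at some state of some neighborhood model
whose neighborhood function at every state contains the unit and is closed under
complements. -/
theorem EN_strongly_complete {P : Type} [Nonempty P]
    (Γ : Set (Formula P)) (hcon : Consistent (AxDeltaN P) Γ) :
    ∃ (M : NbhdModel P) (s : M.S),
      ContainsUnit M.N ∧ ComplClosed M.N ∧ ∀ φ ∈ Γ, M.sat s φ := by
  classical
  obtain ⟨Δ, hsub, hΔ⟩ := CLAux.lindenbaum hcon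
  have hne : Nonempty (CLAux.CanS (AxDeltaN P)) := ⟨⟨Δ, hΔ⟩⟩
  refine ⟨CLAux.canM (AxDeltaN P) hne, ⟨Δ, hΔ⟩, ?_, ?_, ?_⟩
  · intro s
    refine ⟨Formula.top P, ?_, Or.inl ?_⟩
    · exact s.2.thm_mem (Deriv.ax rfl)
    · ext t
      simp only [Set.mem_univ, true_iff]
      exact t.2.thm_mem (Deriv.taut (CLAux.tautTop P))
  · rintro s X ⟨ψ, hψ, rfl | rfl⟩
    · exact ⟨ψ, hψ, Or.inr rfl⟩
    · exact ⟨ψ, hψ, Or.inl (compl_compl _)⟩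
  · intro φ hφ
    show _ ∈ (CLAux.canM (AxDeltaN P) hne).truthSet φ
    rw [CLAux.truth_lemma]
    exact hsub hφ
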